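/- Let S : C → C be nonspreading with Fix(S) ≠ ∅, δ ∈ (0,1), A_S = (1−δ)I + δS. Then A_S is quasi-firmly type nonexpansive with coefficient 1−δ: ‖A_Sx − p‖² ≤ ‖x − p‖² − (1−δ)‖x − A_Sx‖² for all x ∈ C, p ∈ Fix(S). -/

import Mathlib

theorem stmt_10 {H : Type*} [NormedAddCommGroup H] [InnerProductSpace ℝ H]
    (C : Set H) (hC : C.Nonempty) (hCc : IsClosed C) (hCv : Convex ℝ C)
    (S : H → H) (hS : Set.MapsTo S C C)
    (hns : ∀ x ∈ C, ∀ y ∈ C, 2 * ‖S x - S y‖ ^ 2 ≤ ‖S x - y‖ ^ 2 + ‖x - S y‖ ^ 2)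
    (hFix : ∃ z ∈ C, S z = z)
    (δ : ℝ) (hδ : δ ∈ Set.Ioo (0 : ℝ) 1)
    (A : H → H) (hA : ∀ x, A x = (1 - δ) • x + δ • S x) :
    ∀ x ∈ C, ∀ p ∈ C, S p = p →
      ‖A x - p‖ ^ 2 ≤ ‖x - p‖ ^ 2 - (1 - δ) * ‖x - A x‖ ^ 2 := by
  obtain ⟨hδ0, hδ1⟩ := hδ
  intro x hx p hp hpfix
  have hq : ‖S x - p‖ ^ 2 ≤ ‖x - p‖ ^ 2 := by
    have := hns x hx p hp
    rw [hpfix] at this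
    linarith
  set a := x - p with ha
  set b := S x - p with hb
  have h1 : A x - p = (1 - δ) • a + δ • b := by
    rw [hA]; simp only [ha, hb, smul_sub, sub_smul, one_smul]; abel
  have h2 : x - A x = δ • (a - b) := by
    rw [hA]; simp only [ha, hb, smul_sub, sub_smul, one_smul]; abel
  have e1 : ‖A x - p‖ ^ 2 = (1 - δ) ^ 2 * ‖a‖ ^ 2
      + 2 * ((1 - δ) * δ) * inner ℝ a b + δ ^ 2 * ‖b‖ ^ 2 := by
    rw [h1, @norm_add_sq_real, real_inner_smul_left, real_inner_smul_right,
      norm_smul, norm_smul, Real.norm_eq_abs, Real.norm_eq_abs,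
      abs_of_pos hδ0, abs_of_pos (by linarith : (0:ℝ) < 1 - δ)]
    ring
  have e2 : ‖x - A x‖ ^ 2 = δ ^ 2 * (‖a‖ ^ 2 - 2 * inner ℝ a b + ‖b‖ ^ 2) := by
    rw [h2, norm_smul, Real.norm_eq_abs, abs_of_pos hδ0, mul_pow,
      @norm_sub_sq_real]
  have hab : (0:ℝ) ≤ ‖a‖ ^ 2 - 2 * inner ℝ a b + ‖b‖ ^ 2 := by
    have h := @norm_sub_sq_real H _ _ a b
    nlinarith [sq_nonneg ‖a - b‖]
  rw [e1, e2]
  nlinarith [hq, hab, sq_nonneg (1 - δ), hδ0, hδ1]
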